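/- The semicategory of conditional likelihoods has no identity morphisms on positive-dimensional objects: for every b ≥ 1 there is no Borel measurable function δ : ℝ^b × ℝ^b → ℝ such that for every Borel measurable, Lebesgue-integrable L : ℝ^b → ℝ and every x ∈ ℝ^b, ∫_{ℝ^b} δ(x, x') · L(x') dλ^b(x') = L(x). -/

import Mathlib

open MeasureTheory

/-- The semicategory of conditional likelihoods has no identity morphisms on
positive-dimensional objects: for `b ≥ 1` there is no measurable kernel
`δ : ℝ^b × ℝ^b → ℝ` reproducing every Borel measurable Lebesgue-integrable function
under integral composition. -/
theorem no_identity_likelihood_kernel {b : ℕ} (hb : 1 ≤ b) :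
    ¬ ∃ δ : (Fin b → ℝ) × (Fin b → ℝ) → ℝ, Measurable δ ∧
        ∀ L : (Fin b → ℝ) → ℝ, Measurable L →
          Integrable L (volume : Measure (Fin b → ℝ)) →
          ∀ x : Fin b → ℝ,
            (∫ x', δ (x, x') * L x' ∂(volume : Measure (Fin b → ℝ))) = L x := by
  rintro ⟨δ, hδ, h⟩
  haveI : Nonempty (Fin b) := ⟨⟨0, hb⟩⟩
  set x : Fin b → ℝ := fun _ => 0
  set L : (Fin b → ℝ) → ℝ := Set.indicator {x} (fun _ => 1) with hL
  have hLmeas : Measurable L :=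
    (measurable_const.indicator (measurableSet_singleton x))
  have hnull : (volume : Measure (Fin b → ℝ)) {x} = 0 := measure_singleton x
  have hae : L =ᵐ[volume] (fun _ => (0:ℝ)) := by
    filter_upwards [measure_eq_zero_iff_ae_notMem.mp hnull] with y hy
    simp only [hL, Set.indicator_of_notMem hy]
  have hInt : Integrable L (volume : Measure (Fin b → ℝ)) :=
    (integrable_congr hae).mpr (integrable_zero _ _ _)
  have := h L hLmeas hInt x
  have hz : (∫ x', δ (x, x') * L x' ∂(volume : Measure (Fin b → ℝ))) = 0 := by
    apply integral_eq_zero_of_ae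
    filter_upwards [hae] with y hy
    simp [hy]
  rw [hz] at this
  simp [hL, Set.indicator_of_mem (Set.mem_singleton x)] at this
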